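/- Theorem (bidirected graph models are log-mean linear models): the distribution of a binary vector X_V satisfies the connected set Markov property with respect to a bidirected graph G (i.e., for every disconnected set D with connected components C_1,…,C_r, the subvectors X_{C_1},…,X_{C_r} are mutually independent) if and only if γ_D = 0 for every set D that is disconnected in G. -/

import Mathlib

open Finset

/-- Probability that the subvector `X_A` shows the cell pattern `i ⊆ A`
(coordinates in `i` equal to 1, coordinates in `A \ i` equal to 0), for a
binary random vector whose joint distribution on `{0,1}^V` is encoded by the
vector `π` indexed by subsets of `V`. -/
def cellProb {V : Type*} [Fintype V] [DecidableEq V]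
    (π : Finset V → ℝ) (A i : Finset V) : ℝ :=
  ∑ H ∈ univ.powerset.filter (fun H => H ∩ A = i), π H

/-- The mean parameter: `μ_D = P(X_D = 1_D)`. -/
def mu {V : Type*} [Fintype V] [DecidableEq V]
    (π : Finset V → ℝ) (D : Finset V) : ℝ :=
  ∑ H ∈ univ.powerset.filter (fun H => D ⊆ H), π H

/-- The log-mean linear parameter `γ_D = Σ_{E ⊆ D} (-1)^{|D\E|} log μ_E`. -/
noncomputable def gam {V : Type*} [Fintype V] [DecidableEq V]
    (π : Finset V → ℝ) (D : Finset V) : ℝ :=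
  ∑ E ∈ D.powerset, (-1 : ℝ) ^ (D \ E).card * Real.log (mu π E)


set_option linter.unusedSectionVars false
set_option maxHeartbeats 1000000

section

variable {V : Type*} [DecidableEq V]

lemma neg_one_pow_sdiff (t b : Finset V) (hb : b ⊆ t) :
    ((-1 : ℝ)) ^ (t \ b).card = (-1) ^ t.card * (-1) ^ b.card := by
  have h1 : ((-1:ℝ))^(t\b).card * (-1)^b.card = (-1)^t.card := by
    rw [← pow_add, Finset.card_sdiff_add_card_eq_card hb]
  have h2 : ((-1:ℝ))^b.card * (-1)^b.card = 1 := by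
    rw [← pow_add]; exact Even.neg_one_pow ⟨b.card, rfl⟩
  calc ((-1:ℝ))^(t\b).card = (-1)^(t\b).card * ((-1)^b.card * (-1)^b.card) := by rw [h2, mul_one]
    _ = ((-1)^(t\b).card * (-1)^b.card) * (-1)^b.card := by ring
    _ = (-1)^t.card * (-1)^b.card := by rw [h1]

lemma sum_powerset_sign (t : Finset V) (ht : t.Nonempty) :
    ∑ b ∈ t.powerset, (-1 : ℝ) ^ (t \ b).card = 0 := by
  rw [Finset.sum_congr rfl (fun b hb => neg_one_pow_sdiff t b (Finset.mem_powerset.1 hb)),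
    ← Finset.mul_sum]
  have := Finset.sum_powerset_neg_one_pow_card_of_nonempty ht
  have h : ∑ b ∈ t.powerset, (-1 : ℝ) ^ b.card = 0 := by exact_mod_cast congrArg (fun z : ℤ => (z : ℝ)) this
  rw [h, mul_zero]

lemma sum_powerset_union_aux (s t : Finset V) (hst : Disjoint s t) (g : Finset V → ℝ) :
    ∑ A ∈ (s ∪ t).powerset, g A = ∑ a ∈ s.powerset, ∑ b ∈ t.powerset, g (a ∪ b) := by
  rw [← Finset.sum_product (s := s.powerset) (t := t.powerset)
    (f := fun p => g (p.1 ∪ p.2))]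
  refine Finset.sum_nbij' (fun A => (A ∩ s, A ∩ t)) (fun p => p.1 ∪ p.2) ?_ ?_ ?_ ?_ ?_
  · intro A hA
    simp only [Finset.mem_product, Finset.mem_powerset]
    exact ⟨Finset.inter_subset_right, Finset.inter_subset_right⟩
  · intro p hp
    simp only [Finset.mem_product, Finset.mem_powerset] at hp
    exact Finset.mem_powerset.2 (Finset.union_subset_union hp.1 hp.2)
  · intro A hA
    simp only [Finset.mem_powerset] at hA
    show A ∩ s ∪ A ∩ t = A
    rw [← Finset.inter_union_distrib_left, Finset.inter_eq_left.2 hA]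
  · intro p hp
    simp only [Finset.mem_product, Finset.mem_powerset] at hp
    have h1 : p.1 ∩ t = ∅ := Finset.eq_empty_of_forall_notMem fun x hx =>
      hst.forall_ne_finset (hp.1 (Finset.mem_of_mem_inter_left hx))
        (Finset.mem_of_mem_inter_right hx) rfl
    have h2 : p.2 ∩ s = ∅ := Finset.eq_empty_of_forall_notMem fun x hx =>
      hst.symm.forall_ne_finset (hp.2 (Finset.mem_of_mem_inter_left hx))
        (Finset.mem_of_mem_inter_right hx) rfl
    have e1 : (p.1 ∪ p.2) ∩ s = p.1 := by
      rw [Finset.union_inter_distrib_right, Finset.inter_eq_left.2 hp.1, h2, Finset.union_empty]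
    have e2 : (p.1 ∪ p.2) ∩ t = p.2 := by
      rw [Finset.union_inter_distrib_right, Finset.inter_eq_left.2 hp.2, h1, Finset.empty_union]
    rw [Prod.ext_iff]; exact ⟨e1, e2⟩
  · intro A hA
    show g A = g (A ∩ s ∪ A ∩ t)
    rw [← Finset.inter_union_distrib_left, Finset.inter_eq_left.2 (Finset.mem_powerset.1 hA)]

end

section
variable {V : Type*} [Fintype V] [DecidableEq V] {π : Finset V → ℝ}

lemma mu_pos (hpos : ∀ H, 0 < π H) (S : Finset V) : 0 < mu π S := by
  apply Finset.sum_pos (fun H _ => hpos H)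
  exact ⟨univ, by simp⟩

lemma mu_empty (hsum : ∑ H ∈ (univ : Finset V).powerset, π H = 1) : mu π (∅ : Finset V) = 1 := by
  rw [← hsum]; apply Finset.sum_congr _ (fun _ _ => rfl)
  ext H; simp

lemma mu_eq_sum_cellProb {S D : Finset V} (hS : S ⊆ D) :
    mu π S = ∑ i ∈ D.powerset.filter (fun i => S ⊆ i), cellProb π D i := by
  unfold mu cellProb
  rw [Finset.sum_fiberwise_eq_sum_filter _ _ (fun H => H ∩ D)]
  apply Finset.sum_congr _ (fun _ _ => rfl)
  ext H
  simp only [Finset.mem_filter, Finset.mem_powerset, Finset.subset_univ, true_and]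
  constructor
  · intro h; exact ⟨Finset.inter_subset_right, Finset.subset_inter h hS⟩
  · intro h; exact h.2.trans Finset.inter_subset_left

lemma mobius_kernel (i l : Finset V) (hil : i ⊆ l) :
    ∑ k ∈ l.powerset.filter (fun k => i ⊆ k), (-1 : ℝ) ^ (k \ i).card
      = if l = i then 1 else 0 := by
  have : ∑ k ∈ l.powerset.filter (fun k => i ⊆ k), (-1 : ℝ) ^ (k \ i).card
      = ∑ m ∈ (l \ i).powerset, (-1 : ℝ) ^ m.card := by
    refine Finset.sum_nbij' (fun k => k \ i) (fun m => m ∪ i) ?_ ?_ ?_ ?_ ?_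
    · intro k hk
      simp only [Finset.mem_filter, Finset.mem_powerset] at hk ⊢
      exact Finset.sdiff_subset_sdiff hk.1 Finset.Subset.rfl
    · intro m hm
      simp only [Finset.mem_powerset] at hm
      simp only [Finset.mem_filter, Finset.mem_powerset]
      exact ⟨Finset.union_subset (hm.trans (Finset.sdiff_subset)) hil, Finset.subset_union_right⟩
    · intro k hk
      simp only [Finset.mem_filter, Finset.mem_powerset] at hk
      exact Finset.sdiff_union_of_subset hk.2
    · intro m hm
      simp only [Finset.mem_powerset] at hm
      show (m ∪ i) \ i = m
      rw [Finset.union_sdiff_right, Finset.sdiff_eq_self_iff_disjoint]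
      exact Finset.disjoint_left.2 fun x hx => (Finset.mem_sdiff.1 (hm hx)).2
    · intro k hk; rfl
  rw [this]
  have hc := @Finset.sum_powerset_neg_one_pow_card V _ (l \ i)
  have : ∑ m ∈ (l \ i).powerset, (-1 : ℝ) ^ m.card
      = ((if l \ i = ∅ then 1 else 0 : ℤ) : ℝ) := by exact_mod_cast congrArg (fun z : ℤ => (z : ℝ)) hc
  rw [this]
  by_cases h : l = i
  · simp [h]
  · have : l \ i ≠ ∅ := fun he => h (Finset.Subset.antisymm
      (fun x hx => by_contra fun hxi => (Finset.eq_empty_iff_forall_notMem.1 he x)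
        (Finset.mem_sdiff.2 ⟨hx, hxi⟩)) hil)
    simp [h, this]

lemma sum_sum_powerset (A : Finset V) (F : Finset V → Finset V → ℝ) :
    ∑ E ∈ A.powerset, ∑ B ∈ E.powerset, F E B
      = ∑ B ∈ A.powerset, ∑ E ∈ A.powerset.filter (fun E => B ⊆ E), F E B := by
  refine Finset.sum_comm' ?_
  intro E B
  simp only [Finset.mem_powerset, Finset.mem_filter]
  constructor
  · rintro ⟨h1, h2⟩; exact ⟨⟨h1, h2⟩, h2.trans h1⟩
  · rintro ⟨⟨h1, h2⟩, h3⟩; exact ⟨h1, h2⟩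

lemma cellProb_eq_sum_mu {i D : Finset V} (hi : i ⊆ D) :
    cellProb π D i
      = ∑ k ∈ D.powerset.filter (fun k => i ⊆ k), (-1 : ℝ) ^ (k \ i).card * mu π k := by
  have step : ∀ k ∈ D.powerset.filter (fun k => i ⊆ k),
      (-1 : ℝ) ^ (k \ i).card * mu π k
        = ∑ j ∈ D.powerset.filter (fun j => k ⊆ j), (-1 : ℝ) ^ (k \ i).card * cellProb π D j := by
    intro k hk
    simp only [Finset.mem_filter, Finset.mem_powerset] at hk
    rw [mu_eq_sum_cellProb hk.1, Finset.mul_sum]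
  rw [Finset.sum_congr rfl step]
  rw [Finset.sum_comm' (t' := D.powerset.filter (fun j => i ⊆ j))
    (s' := fun j => j.powerset.filter (fun k => i ⊆ k)) ?_]
  · have : ∀ j ∈ D.powerset.filter (fun j => i ⊆ j),
        ∑ k ∈ j.powerset.filter (fun k => i ⊆ k), (-1 : ℝ) ^ (k \ i).card * cellProb π D j
          = (if j = i then 1 else 0) * cellProb π D j := by
      intro j hj
      simp only [Finset.mem_filter, Finset.mem_powerset] at hj
      rw [← Finset.sum_mul, mobius_kernel i j hj.2]
    rw [Finset.sum_congr rfl this]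
    have : ∀ x ∈ D.powerset.filter (fun j => i ⊆ j),
        (if x = i then (1:ℝ) else 0) * cellProb π D x
          = if x = i then cellProb π D x else 0 := by
      intro x _; split <;> simp
    rw [Finset.sum_congr rfl this, Finset.sum_ite_eq' _ i]
    simp [Finset.mem_powerset, hi]
  · intro k j
    simp only [Finset.mem_filter, Finset.mem_powerset]
    constructor
    · rintro ⟨⟨h1, h2⟩, h3, h4⟩; exact ⟨⟨h4, h2⟩, h3, h2.trans h4⟩
    · rintro ⟨⟨h1, h2⟩, h3, h4⟩; exact ⟨⟨h1.trans h3, h2⟩, h3, h1⟩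

lemma sum_powerset_gam (A : Finset V) :
    ∑ E ∈ A.powerset, gam π E = Real.log (mu π A) := by
  unfold gam
  rw [sum_sum_powerset]
  have : ∀ B ∈ A.powerset,
      ∑ E ∈ A.powerset.filter (fun E => B ⊆ E), (-1 : ℝ) ^ (E \ B).card * Real.log (mu π B)
        = (if A = B then 1 else 0) * Real.log (mu π B) := by
    intro B hB
    rw [← Finset.sum_mul, mobius_kernel B A (Finset.mem_powerset.1 hB)]
  rw [Finset.sum_congr rfl this]
  have h2 : ∀ x ∈ A.powerset,
      (if A = x then (1:ℝ) else 0) * Real.log (mu π x)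
        = if x = A then Real.log (mu π x) else 0 := by
    intro x _
    by_cases h : x = A
    · simp [h]
    · rw [if_neg h, if_neg (fun hh => h hh.symm), zero_mul]
  rw [Finset.sum_congr rfl h2, Finset.sum_ite_eq' _ A]
  simp

end

section

variable {V : Type*} [Fintype V] [DecidableEq V]

lemma biUnion_inter_eq {r : ℕ} (C : Fin r → Finset V)
    (hdis : ∀ i j, i ≠ j → Disjoint (C i) (C j))
    (x : Fin r → Finset V) (hx : ∀ j, x j ⊆ C j) (j : Fin r) :
    (univ.biUnion x) ∩ C j = x j := by
  ext a
  simp only [Finset.mem_inter, Finset.mem_biUnion, Finset.mem_univ, true_and]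
  constructor
  · rintro ⟨⟨i, hi⟩, haj⟩
    rcases eq_or_ne i j with rfl | hij
    · exact hi
    · exact absurd rfl ((hdis i j hij).forall_ne_finset (hx i hi) haj)
  · intro ha; exact ⟨⟨j, ha⟩, hx j ha⟩

lemma sum_filter_eq_prod {r : ℕ} (C : Fin r → Finset V)
    (hdis : ∀ i j, i ≠ j → Disjoint (C i) (C j)) {D : Finset V}
    (hD : univ.biUnion C = D) {A : Finset V} (hA : A ⊆ D)
    (g : Fin r → Finset V → ℝ) :
    ∑ k ∈ D.powerset.filter (fun k => A ⊆ k), ∏ j, g j (k ∩ C j)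
      = ∏ j, ∑ kj ∈ (C j).powerset.filter (fun kj => A ∩ C j ⊆ kj), g j kj := by
  rw [Finset.prod_univ_sum]
  refine Finset.sum_nbij' (fun k => fun j => k ∩ C j) (fun x => univ.biUnion x) ?_ ?_ ?_ ?_ ?_
  · intro k hk
    simp only [Finset.mem_filter, Finset.mem_powerset] at hk
    rw [Fintype.mem_piFinset]
    intro j
    simp only [Finset.mem_filter, Finset.mem_powerset]
    exact ⟨Finset.inter_subset_right, Finset.inter_subset_inter hk.2 Finset.Subset.rfl⟩
  · intro x hx
    rw [Fintype.mem_piFinset] at hx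
    have hxC : ∀ j, x j ⊆ C j := fun j => (Finset.mem_filter.1 (hx j)).1 |> Finset.mem_powerset.1
    simp only [Finset.mem_filter, Finset.mem_powerset]
    constructor
    · intro a ha
      rw [Finset.mem_biUnion] at ha
      obtain ⟨j, -, hj⟩ := ha
      rw [← hD, Finset.mem_biUnion]
      exact ⟨j, Finset.mem_univ j, hxC j hj⟩
    · intro a ha
      have haD : a ∈ univ.biUnion C := by rw [hD]; exact hA ha
      rw [Finset.mem_biUnion] at haD
      obtain ⟨j, -, hj⟩ := haD
      rw [Finset.mem_biUnion]
      refine ⟨j, Finset.mem_univ j, ?_⟩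
      have : a ∈ A ∩ C j := Finset.mem_inter.2 ⟨ha, hj⟩
      exact (Finset.mem_filter.1 (hx j)).2 this
  · intro k hk
    simp only [Finset.mem_filter, Finset.mem_powerset] at hk
    ext a
    simp only [Finset.mem_biUnion, Finset.mem_univ, true_and, Finset.mem_inter]
    constructor
    · rintro ⟨j, hj, -⟩; exact hj
    · intro ha
      have : a ∈ univ.biUnion C := by rw [hD]; exact hk.1 ha
      rw [Finset.mem_biUnion] at this
      obtain ⟨j, -, hj⟩ := this
      exact ⟨j, ha, hj⟩
  · intro x hx
    rw [Fintype.mem_piFinset] at hx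
    have hxC : ∀ j, x j ⊆ C j := fun j => (Finset.mem_filter.1 (hx j)).1 |> Finset.mem_powerset.1
    funext j
    exact biUnion_inter_eq C hdis x hxC j
  · intro k hk; rfl

end

section

variable {V : Type*} [Fintype V] [DecidableEq V] (G : SimpleGraph V)

def FLinked (s : Finset V) (u v : V) : Prop :=
  ∃ p : G.Walk u v, ∀ x ∈ p.support, x ∈ s

namespace FLinked

variable {G} {s : Finset V} {u v w : V}

lemma refl (hu : u ∈ s) : FLinked G s u u := ⟨SimpleGraph.Walk.nil, by simpa using hu⟩

lemma symm (h : FLinked G s u v) : FLinked G s v u := by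
  obtain ⟨p, hp⟩ := h
  exact ⟨p.reverse, fun x hx => hp x (by simpa using hx)⟩

lemma trans (h1 : FLinked G s u v) (h2 : FLinked G s v w) : FLinked G s u w := by
  obtain ⟨p, hp⟩ := h1; obtain ⟨q, hq⟩ := h2
  refine ⟨p.append q, fun x hx => ?_⟩
  rcases (SimpleGraph.Walk.mem_support_append_iff p q).1 hx with h | h
  exacts [hp x h, hq x h]

lemma mem_left (h : FLinked G s u v) : u ∈ s := by
  obtain ⟨p, hp⟩ := h; exact hp u p.start_mem_support

lemma mem_right (h : FLinked G s u v) : v ∈ s := by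
  obtain ⟨p, hp⟩ := h; exact hp v p.end_mem_support

lemma mono {t : Finset V} (h : FLinked G s u v) (hst : s ⊆ t) : FLinked G t u v := by
  obtain ⟨p, hp⟩ := h; exact ⟨p, fun x hx => hst (hp x hx)⟩

/-- every vertex on a witnessing walk is linked to the start -/
lemma of_mem_support (p : G.Walk u v) (hp : ∀ x ∈ p.support, x ∈ s) (hw : w ∈ p.support) :
    FLinked G s u w := by
  obtain ⟨q, r, rfl⟩ := SimpleGraph.Walk.mem_support_iff_exists_append.1 hw
  exact ⟨q, fun x hx => hp x ((SimpleGraph.Walk.mem_support_append_iff q r).2 (Or.inl hx))⟩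

lemma adj (h : G.Adj u v) (hu : u ∈ s) (hv : v ∈ s) : FLinked G s u v := by
  refine ⟨h.toWalk, ?_⟩
  intro x hx
  simp only [SimpleGraph.Walk.support_cons, SimpleGraph.Walk.support_nil,
    List.mem_cons, List.mem_singleton] at hx
  rcases hx with rfl | rfl | h'
  exacts [hu, hv, absurd h' List.not_mem_nil]

end FLinked

lemma connected_iff_flinked (s : Finset V) :
    (G.induce (↑s : Set V)).Connected ↔
      s.Nonempty ∧ ∀ u ∈ s, ∀ v ∈ s, FLinked G s u v := by
  rw [SimpleGraph.connected_induce_iff, SimpleGraph.Subgraph.connected_iff_forall_exists_walk_subgraph]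
  constructor
  · rintro ⟨⟨x, hx⟩, h⟩
    refine ⟨⟨x, by simpa using hx⟩, fun u hu v hv => ?_⟩
    obtain ⟨p, hp⟩ := h (by simpa using hu) (by simpa using hv)
    exact ⟨p, fun y hy => by simpa using hp.1 (p.mem_verts_toSubgraph.2 hy)⟩
  · rintro ⟨⟨x, hx⟩, h⟩
    refine ⟨⟨x, by simpa using hx⟩, fun {u v} hu hv => ?_⟩
    obtain ⟨p, hp⟩ := h u (by simpa using hu) v (by simpa using hv)
    refine ⟨p, ?_, ?_⟩
    · intro y hy
      simpa using hp y (p.mem_verts_toSubgraph.1 hy)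
    · intro a b hab
      have ha := hp a (p.mem_verts_toSubgraph.1 (hab.fst_mem))
      have hb := hp b (p.mem_verts_toSubgraph.1 (hab.snd_mem))
      simp [SimpleGraph.Subgraph.induce_adj, ha, hb, hab.adj_sub]

lemma walk_block {r : ℕ} (C : Fin r → Finset V)
    (hsep : ∀ i j, i ≠ j → ∀ u ∈ C i, ∀ v ∈ C j, ¬ G.Adj u v) (j : Fin r) :
    ∀ {a c : V} (p : G.Walk a c),
      (∀ x ∈ p.support, x ∈ univ.biUnion C) → a ∈ C j → c ∈ C j := by
  intro a c p
  induction p with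
  | nil => exact fun _ h => h
  | @cons a b c hab q ih =>
    intro hsupp ha
    have hbD : b ∈ univ.biUnion C := hsupp b (by simp)
    rw [Finset.mem_biUnion] at hbD
    obtain ⟨i, -, hbi⟩ := hbD
    have hij : i = j := by
      by_contra hne
      exact hsep j i (fun h => hne h.symm) a ha b hbi hab
    subst hij
    exact ih (fun x hx => hsupp x (by simp [hx])) hbi

/-- a connected set inside a separated union lies inside one block -/
lemma connected_subset_block {r : ℕ} (C : Fin r → Finset V)
    (hsep : ∀ i j, i ≠ j → ∀ u ∈ C i, ∀ v ∈ C j, ¬ G.Adj u v)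
    {E : Finset V} (hE : E ⊆ univ.biUnion C) (hconn : (G.induce (↑E : Set V)).Connected) :
    ∃ j, E ⊆ C j := by
  obtain ⟨⟨x, hx⟩, hlink⟩ := (connected_iff_flinked G E).1 hconn
  have hxD := hE hx
  rw [Finset.mem_biUnion] at hxD
  obtain ⟨j, -, hj⟩ := hxD
  refine ⟨j, fun u hu => ?_⟩
  obtain ⟨p, hp⟩ := hlink x hx u hu
  exact walk_block G C hsep j p (fun y hy => hE (hp y hy)) hj

open Classical in
lemma exists_components (D : Finset V) (hne : D.Nonempty)
    (hnc : ¬ (G.induce (↑D : Set V)).Connected) :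
    ∃ (r : ℕ) (C : Fin r → Finset V), 2 ≤ r ∧ (∀ i, (C i).Nonempty) ∧
      (∀ i j, i ≠ j → Disjoint (C i) (C j)) ∧ univ.biUnion C = D ∧
      (∀ i, (G.induce (↑(C i) : Set V)).Connected) ∧
      (∀ i j, i ≠ j → ∀ u ∈ C i, ∀ v ∈ C j, ¬ G.Adj u v) := by
  set comp : V → Finset V := fun v => D.filter (fun u => FLinked G D v u) with hcomp
  have k2 : ∀ v u, u ∈ comp v ↔ (u ∈ D ∧ FLinked G D v u) := by
    intro v u; simp [hcomp]
  have k1 : ∀ v ∈ D, v ∈ comp v := fun v hv => (k2 v v).2 ⟨hv, FLinked.refl hv⟩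
  have k3 : ∀ u v, FLinked G D u v → comp u = comp v := by
    intro u v h
    ext y
    rw [k2, k2]
    exact ⟨fun hy => ⟨hy.1, h.symm.trans hy.2⟩, fun hy => ⟨hy.1, h.trans hy.2⟩⟩
  have ksub : ∀ v u, u ∈ comp v → FLinked G (comp v) v u := by
    intro v u hu
    obtain ⟨hud, p, hp⟩ := (k2 v u).1 hu
    exact ⟨p, fun x hx => (k2 v x).2 ⟨hp x hx, FLinked.of_mem_support p hp hx⟩⟩
  have k4 : ∀ v ∈ D, (G.induce (↑(comp v) : Set V)).Connected := by
    intro v hv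
    rw [connected_iff_flinked]
    refine ⟨⟨v, k1 v hv⟩, fun u hu w hw => ?_⟩
    exact (ksub v u hu).symm.trans (ksub v w hw)
  set comps : Finset (Finset V) := D.image comp with hcomps
  have hcard : 2 ≤ comps.card := by
    rw [connected_iff_flinked] at hnc
    push_neg at hnc
    obtain ⟨u, hu, v, hv, hnl⟩ := hnc hne
    rw [Nat.succ_le_iff, Finset.one_lt_card]
    refine ⟨comp u, Finset.mem_image_of_mem comp hu, comp v, Finset.mem_image_of_mem comp hv, ?_⟩
    intro heq
    have : u ∈ comp v := heq ▸ k1 u hu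
    exact hnl ((k2 v u).1 this).2.symm
  refine ⟨comps.card, fun i => ((comps.equivFin.symm i : comps) : Finset V), hcard, ?_, ?_, ?_, ?_, ?_⟩
  all_goals
    have hCmem : ∀ i : Fin comps.card, ((comps.equivFin.symm i : comps) : Finset V) ∈ comps :=
      fun i => (comps.equivFin.symm i).2
    have hCinj : ∀ i j : Fin comps.card,
        ((comps.equivFin.symm i : comps) : Finset V) = ((comps.equivFin.symm j : comps) : Finset V)
          → i = j := by
      intro i j h
      have := Subtype.ext h
      exact comps.equivFin.symm.injective this
    have hrep : ∀ i : Fin comps.card, ∃ v ∈ D,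
        ((comps.equivFin.symm i : comps) : Finset V) = comp v := by
      intro i
      obtain ⟨v, hv, hvc⟩ := Finset.mem_image.1 (hCmem i)
      exact ⟨v, hv, hvc.symm⟩
  · -- nonempty
    intro i
    dsimp only
    obtain ⟨v, hv, hc⟩ := hrep i
    exact ⟨v, hc ▸ k1 v hv⟩
  · -- pairwise disjoint
    intro i j hij
    dsimp only
    obtain ⟨a, ha, hca⟩ := hrep i
    obtain ⟨b, hb, hcb⟩ := hrep j
    rw [Finset.disjoint_left]
    intro x hxi hxj
    apply hij
    apply hCinj
    rw [hca, hcb]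
    rw [hca] at hxi; rw [hcb] at hxj
    exact k3 a b ((((k2 a x).1 hxi).2).trans (((k2 b x).1 hxj).2).symm)
  · -- biUnion
    ext x
    rw [Finset.mem_biUnion]
    constructor
    · rintro ⟨i, -, hx⟩
      obtain ⟨v, hv, hc⟩ := hrep i
      have hx' : x ∈ comp v := by rw [← hc]; exact hx
      exact Finset.filter_subset _ _ hx'
    · intro hx
      have hmem : comp x ∈ comps := Finset.mem_image_of_mem comp hx
      refine ⟨comps.equivFin ⟨comp x, hmem⟩, Finset.mem_univ _, ?_⟩
      rw [Equiv.symm_apply_apply]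
      exact k1 x hx
  · -- connected
    intro i
    dsimp only
    obtain ⟨v, hv, hc⟩ := hrep i
    rw [hc]
    exact k4 v hv
  · -- separation
    intro i j hij u hu w hw hadj
    dsimp only at hu hw
    obtain ⟨a, ha, hca⟩ := hrep i
    obtain ⟨b, hb, hcb⟩ := hrep j
    rw [hca] at hu; rw [hcb] at hw
    have hu2 := (k2 a u).1 hu
    have hw2 := (k2 b w).1 hw
    have : FLinked G D a b :=
      (hu2.2.trans (FLinked.adj hadj hu2.1 hw2.1)).trans hw2.2.symm
    exact hij (hCinj i j (by rw [hca, hcb]; exact k3 a b this))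

end

section

variable {V : Type*} [Fintype V] [DecidableEq V]


lemma sum_sign_zero (s t : Finset V) (hst : Disjoint s t) (ht : t.Nonempty) (h : Finset V → ℝ) :
    ∑ A ∈ (s ∪ t).powerset, (-1 : ℝ) ^ (((s ∪ t) \ A).card) * h (A ∩ s) = 0 := by
  rw [sum_powerset_union_aux s t hst]
  have key : ∀ a ∈ s.powerset, ∀ b ∈ t.powerset,
      (-1 : ℝ) ^ (((s ∪ t) \ (a ∪ b)).card) * h ((a ∪ b) ∩ s)
        = ((-1) ^ ((s \ a).card) * h a) * (-1) ^ ((t \ b).card) := by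
    intro a ha b hb
    rw [Finset.mem_powerset] at ha hb
    have h1 : (s ∪ t) \ (a ∪ b) = (s \ a) ∪ (t \ b) := by
      ext x
      simp only [Finset.mem_sdiff, Finset.mem_union]
      constructor
      · rintro ⟨hx | hx, hnab⟩
        · exact Or.inl ⟨hx, fun hxa => hnab (Or.inl hxa)⟩
        · exact Or.inr ⟨hx, fun hxb => hnab (Or.inr hxb)⟩
      · rintro (⟨hx, hna⟩ | ⟨hx, hnb⟩)
        · refine ⟨Or.inl hx, ?_⟩
          rintro (h' | h')
          · exact hna h'
          · exact hst.forall_ne_finset hx (hb h') rfl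
        · refine ⟨Or.inr hx, ?_⟩
          rintro (h' | h')
          · exact hst.forall_ne_finset (ha h') hx rfl
          · exact hnb h'
    have h2 : ((s \ a) ∪ (t \ b)).card = (s \ a).card + (t \ b).card :=
      Finset.card_union_of_disjoint
        (hst.mono (Finset.sdiff_subset) (Finset.sdiff_subset))
    have h3 : (a ∪ b) ∩ s = a := by
      rw [Finset.union_inter_distrib_right, Finset.inter_eq_left.2 ha]
      have : b ∩ s = ∅ := Finset.eq_empty_of_forall_notMem fun x hx =>
        hst.symm.forall_ne_finset (hb (Finset.mem_of_mem_inter_left hx))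
          (Finset.mem_of_mem_inter_right hx) rfl
      rw [this, Finset.union_empty]
    rw [h1, h2, h3, pow_add]; ring
  rw [Finset.sum_congr rfl (fun a ha => Finset.sum_congr rfl (fun b hb => key a ha b hb))]
  have : ∀ a ∈ s.powerset,
      ∑ b ∈ t.powerset, ((-1 : ℝ) ^ ((s \ a).card) * h a) * (-1) ^ ((t \ b).card) = 0 := by
    intro a _
    rw [← Finset.mul_sum, sum_powerset_sign t ht, mul_zero]
  rw [Finset.sum_congr rfl this, Finset.sum_const, smul_zero]

lemma eq_biUnion_inter {r : ℕ} (C : Fin r → Finset V) {S : Finset V}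
    (hS : S ⊆ univ.biUnion C) : S = univ.biUnion (fun j => S ∩ C j) := by
  ext x
  simp only [Finset.mem_biUnion, Finset.mem_univ, true_and, Finset.mem_inter]
  constructor
  · intro hx
    obtain ⟨j, -, hj⟩ := Finset.mem_biUnion.1 (hS hx)
    exact ⟨j, hx, hj⟩
  · rintro ⟨j, hx, -⟩; exact hx

lemma card_eq_sum_inter {r : ℕ} (C : Fin r → Finset V)
    (hdis : ∀ i j, i ≠ j → Disjoint (C i) (C j)) {S : Finset V}
    (hS : S ⊆ univ.biUnion C) : S.card = ∑ j, (S ∩ C j).card := by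
  conv_lhs => rw [eq_biUnion_inter C hS]
  exact Finset.card_biUnion fun i _ j _ hij =>
    (hdis i j hij).mono (Finset.inter_subset_right) (Finset.inter_subset_right)

end

theorem bidirected_graph_model_is_log_mean_linear
    {V : Type*} [Fintype V] [DecidableEq V] (G : SimpleGraph V)
    (π : Finset V → ℝ) (hpos : ∀ H : Finset V, 0 < π H)
    (hsum : ∑ H ∈ (univ : Finset V).powerset, π H = 1) :
    (∀ (D : Finset V) (r : ℕ), 2 ≤ r → ∀ C : Fin r → Finset V,
        (∀ i, (C i).Nonempty) →
        (∀ i j, i ≠ j → Disjoint (C i) (C j)) →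
        univ.biUnion C = D →
        (∀ i, (G.induce (↑(C i) : Set V)).Connected) →
        (∀ i j, i ≠ j → ∀ u ∈ C i, ∀ v ∈ C j, ¬ G.Adj u v) →
        ∀ f : Fin r → Finset V, (∀ j, f j ⊆ C j) →
          cellProb π D (univ.biUnion f) = ∏ j : Fin r, cellProb π (C j) (f j)) ↔
      (∀ D : Finset V, ¬ (G.induce (↑D : Set V)).Connected → gam π D = 0) := by
  constructor
  · -- factorization implies vanishing of gamma on disconnected sets
    intro hfac D hnc
    by_cases hD : D = ∅
    · subst hD
      simp [gam, mu_empty hsum]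
    · obtain ⟨r, C, hr, hCne, hdis, hbi, hconn, hsep⟩ :=
        exists_components G D (Finset.nonempty_of_ne_empty hD) hnc
      have hCD : ∀ j, C j ⊆ D := fun j => by
        rw [← hbi]; exact Finset.subset_biUnion_of_mem C (Finset.mem_univ j)
      have hmul : ∀ A ∈ D.powerset, mu π A = ∏ j, mu π (A ∩ C j) := by
        intro A hA
        rw [Finset.mem_powerset] at hA
        rw [mu_eq_sum_cellProb hA]
        have hcp : ∀ i ∈ D.powerset.filter (fun i => A ⊆ i),
            cellProb π D i = ∏ j, cellProb π (C j) (i ∩ C j) := by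
          intro i hi
          rw [Finset.mem_filter, Finset.mem_powerset] at hi
          have hbif : univ.biUnion (fun j => i ∩ C j) = i :=
            (eq_biUnion_inter C (by rw [hbi]; exact hi.1)).symm
          have := hfac D r hr C hCne hdis hbi hconn hsep (fun j => i ∩ C j)
            (fun j => Finset.inter_subset_right)
          rw [hbif] at this
          exact this
        rw [Finset.sum_congr rfl hcp,
          sum_filter_eq_prod C hdis hbi hA (fun j k => cellProb π (C j) k)]
        exact Finset.prod_congr rfl
          (fun j _ => (mu_eq_sum_cellProb Finset.inter_subset_right).symm)
      unfold gam
      have hlog : ∀ A ∈ D.powerset,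
          (-1:ℝ) ^ (D \ A).card * Real.log (mu π A)
            = ∑ j, (-1:ℝ) ^ (D \ A).card * Real.log (mu π (A ∩ C j)) := by
        intro A hA
        rw [hmul A hA, Real.log_prod (fun j _ => (mu_pos hpos _).ne'), Finset.mul_sum]
      rw [Finset.sum_congr rfl hlog, Finset.sum_comm]
      apply Finset.sum_eq_zero
      intro j _
      have hne' : (D \ C j).Nonempty := by
        have hj' : ∃ j' : Fin r, j' ≠ j := by
          rcases eq_or_ne j ⟨0, by omega⟩ with h0 | h0
          · exact ⟨⟨1, by omega⟩, by rw [h0]; simp [Fin.ext_iff]⟩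
          · exact ⟨⟨0, by omega⟩, Ne.symm h0⟩
        obtain ⟨j', hj'⟩ := hj'
        obtain ⟨x, hx⟩ := hCne j'
        exact ⟨x, Finset.mem_sdiff.2 ⟨hCD j' hx,
          fun hxj => (hdis j' j hj').forall_ne_finset hx hxj rfl⟩⟩
      have hD' : C j ∪ (D \ C j) = D := Finset.union_sdiff_of_subset (hCD j)
      rw [← hD']
      exact sum_sign_zero (C j) (D \ C j) Finset.disjoint_sdiff hne'
        (fun m => Real.log (mu π m))
  · -- vanishing of gamma implies factorization
    intro hγ D r hr C hCne hdis hbi hconn hsep f hf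
    have hCD : ∀ j, C j ⊆ D := fun j => by
      rw [← hbi]; exact Finset.subset_biUnion_of_mem C (Finset.mem_univ j)
    have gam_empty : gam π (∅ : Finset V) = 0 := by simp [gam, mu_empty hsum]
    have hmul : ∀ A ⊆ D, mu π A = ∏ j, mu π (A ∩ C j) := by
      intro A hA
      have hAC : A ⊆ univ.biUnion C := by rw [hbi]; exact hA
      have hlog : Real.log (mu π A) = ∑ j, Real.log (mu π (A ∩ C j)) := by
        rw [← sum_powerset_gam A]
        set T := univ.biUnion (fun j => ((A ∩ C j).powerset.erase ∅)) with hT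
        have hTsub : T ⊆ A.powerset := by
          intro E hE
          rw [hT, Finset.mem_biUnion] at hE
          obtain ⟨j, -, hj⟩ := hE
          exact Finset.mem_powerset.2
            ((Finset.mem_powerset.1 (Finset.mem_of_mem_erase hj)).trans
              Finset.inter_subset_left)
        have hzero : ∀ E ∈ A.powerset, E ∉ T → gam π E = 0 := by
          intro E hE hET
          rcases eq_or_ne E ∅ with rfl | hEne
          · exact gam_empty
          by_cases hc : (G.induce (↑E : Set V)).Connected
          · obtain ⟨j, hEj⟩ :=
              connected_subset_block G C hsep ((Finset.mem_powerset.1 hE).trans hAC) hc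
            exact absurd (by
              rw [hT, Finset.mem_biUnion]
              exact ⟨j, Finset.mem_univ j, Finset.mem_erase.2 ⟨hEne,
                Finset.mem_powerset.2
                  (Finset.subset_inter (Finset.mem_powerset.1 hE) hEj)⟩⟩) hET
          · exact hγ E hc
        rw [← Finset.sum_subset hTsub (fun E hE hET => hzero E hE hET), hT,
          Finset.sum_biUnion ?hdisj]
        case hdisj =>
          intro i _ j _ hij
          rw [Function.onFun, Finset.disjoint_left]
          intro E hEi hEj
          obtain ⟨x, hx⟩ := Finset.nonempty_of_ne_empty (Finset.ne_of_mem_erase hEi)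
          have hxi := (Finset.mem_powerset.1 (Finset.mem_of_mem_erase hEi)) hx
          have hxj := (Finset.mem_powerset.1 (Finset.mem_of_mem_erase hEj)) hx
          exact (hdis i j hij).forall_ne_finset
            (Finset.mem_of_mem_inter_right hxi) (Finset.mem_of_mem_inter_right hxj) rfl
        apply Finset.sum_congr rfl
        intro j _
        rw [Finset.sum_erase _ gam_empty, sum_powerset_gam]
      have : mu π A = Real.exp (∑ j, Real.log (mu π (A ∩ C j))) := by
        rw [← hlog, Real.exp_log (mu_pos hpos A)]
      rw [this, Real.exp_sum]
      exact Finset.prod_congr rfl fun j _ => Real.exp_log (mu_pos hpos _)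
    set A := univ.biUnion f with hA
    have hAD : A ⊆ D := by
      rw [hA, ← hbi]
      exact Finset.biUnion_subset.2 fun j _ =>
        (hf j).trans (Finset.subset_biUnion_of_mem C (Finset.mem_univ j))
    rw [cellProb_eq_sum_mu hAD]
    have hterm : ∀ k ∈ D.powerset.filter (fun k => A ⊆ k),
        (-1:ℝ) ^ ((k \ A).card) * mu π k
          = ∏ j, ((-1:ℝ) ^ (((k ∩ C j) \ f j).card) * mu π (k ∩ C j)) := by
      intro k hk
      rw [Finset.mem_filter, Finset.mem_powerset] at hk
      have hkC : k ⊆ univ.biUnion C := by rw [hbi]; exact hk.1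
      have hsd : ∀ j, (k ∩ C j) \ f j = (k \ A) ∩ C j := by
        intro j
        ext x
        simp only [Finset.mem_sdiff, Finset.mem_inter, hA, Finset.mem_biUnion,
          Finset.mem_univ, true_and]
        constructor
        · rintro ⟨⟨hxk, hxj⟩, hnf⟩
          refine ⟨⟨hxk, ?_⟩, hxj⟩
          rintro ⟨i, hxi⟩
          rcases eq_or_ne i j with rfl | hij
          · exact hnf hxi
          · exact (hdis i j hij).forall_ne_finset (hf i hxi) hxj rfl
        · rintro ⟨⟨hxk, hnA⟩, hxj⟩
          exact ⟨⟨hxk, hxj⟩, fun hxf => hnA ⟨j, hxf⟩⟩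
      have hcard : (k \ A).card = ∑ j, ((k \ A) ∩ C j).card :=
        card_eq_sum_inter C hdis ((Finset.sdiff_subset).trans hkC)
      rw [hmul k hk.1, Finset.prod_mul_distrib]
      congr 1
      rw [hcard, ← Finset.prod_pow_eq_pow_sum]
      exact Finset.prod_congr rfl fun j _ => by rw [hsd j]
    rw [Finset.sum_congr rfl hterm,
      sum_filter_eq_prod C hdis hbi hAD
        (fun j m => (-1:ℝ) ^ ((m \ f j).card) * mu π m)]
    apply Finset.prod_congr rfl
    intro j _
    have hAj : A ∩ C j = f j := biUnion_inter_eq C hdis f hf j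
    rw [hAj]
    exact (cellProb_eq_sum_mu (hf j)).symm
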